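/- arXiv:2412.14745 — 7 statements merged into one kernel-verified Lean document; each statement's English description precedes it below -/
import Mathlib

section
/- Let G = ℕ and let E = {A ⊆ ℕ | A finite} ∪ {ℕ}. Then E is a closure system on ℕ, and for the corresponding closure operator γ (where γ(A) = A if A is finite and γ(A) = ℕ otherwise), there is no subset A ⊆ ℕ satisfying both (C1) A ⊊ γ(A) and (C2) for every family (A_j)_{j∈J} of proper subsets A_j ⊊ A one has ⋃_j γ(A_j) ≠ γ(A). In other words, the union-free generic family of implications of this closure system is empty. -/
open Classical in
/-- The closure system of all finite subsets of ℕ together with ℕ has an empty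
ufg-family of implications. -/
theorem stmt3 :
    let E : Set (Set ℕ) := {A | A.Finite} ∪ {Set.univ}
    let γ : Set ℕ → Set ℕ := fun A => if A.Finite then A else Set.univ
    (Set.univ ∈ E ∧
      ∀ (ι : Type) [Nonempty ι] (f : ι → Set ℕ), (∀ i, f i ∈ E) → (⋂ i, f i) ∈ E) ∧
    ¬ ∃ A : Set ℕ, A ⊂ γ A ∧
        ∀ (ι : Type) (f : ι → Set ℕ), (∀ j, f j ⊂ A) → (⋃ j, γ (f j)) ≠ γ A := by
  intro E γ
  constructor
  · constructor
    · exact Or.inr rfl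
    · intro ι _ f hf
      by_cases h : ∃ i, (f i).Finite
      · obtain ⟨i, hi⟩ := h
        exact Or.inl (hi.subset (Set.iInter_subset f i))
      · push_neg at h
        have : ∀ i, f i = Set.univ := fun i => (hf i).resolve_left (h i)
        right
        simp only [Set.mem_singleton_iff]
        simp [Set.iInter_eq_univ, this]
  · rintro ⟨A, hA, hC2⟩
    have hInf : ¬ A.Finite := by
      intro h
      have : γ A = A := if_pos h
      rw [this] at hA
      exact hA.2 hA.1
    have hγA : γ A = Set.univ := if_neg hInf
    obtain ⟨x, hx⟩ : A.Nonempty := Set.nonempty_iff_ne_empty.mpr (fun h => hInf (by rw [h]; exact Set.finite_empty))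
    have hsub : A \ {x} ⊂ A := by
      constructor
      · exact Set.diff_subset
      · intro h
        exact (h hx).2 rfl
    have hInf' : ¬ (A \ {x}).Finite := by
      intro h
      exact hInf ((h.union (Set.finite_singleton x)).subset (by
        intro y hy
        by_cases hyx : y = x
        · exact Or.inr hyx
        · exact Or.inl ⟨hy, hyx⟩))
    have := hC2 ℕ (fun _ => A \ {x}) (fun _ => hsub)
    apply this
    rw [hγA]
    have : γ (A \ {x}) = Set.univ := if_neg hInf'
    simp [this, Set.iUnion_const]
end

section
/- Let γ: 2^(ℝ²) → 2^(ℝ²) be the closed convex hull operator on ℝ². A subset A ⊆ ℝ² with 2 ≤ #A ≤ 3 whose points are affinely independent (i.e., the vertices of a nondegenerate segment or triangle) satisfies: (C1) A ⊊ γ(A), and (C2) for every family (A_j)_{j∈J} of proper subsets A_j ⊊ A, the union ⋃_j γ(A_j) is not equal to γ(A). -/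
open Finset

section aux

variable {E : Type*} [NormedAddCommGroup E] [NormedSpace ℝ E] [DecidableEq E]

/-- The centroid of an affinely independent finset with at least two elements is not
in the convex hull of the finset minus a point, and is not one of the points. -/
lemma centroid_not_mem_erase {s : Finset E}
    (hind : AffineIndependent ℝ ((↑) : ↑(s : Set E) → E))
    (hcard : 2 ≤ s.card) {a : E} (ha : a ∈ s) :
    s.centroid ℝ id ∉ convexHull ℝ ((s.erase a : Finset E) : Set E) := by
  classical
  intro hc
  have hne : s.Nonempty := Finset.card_pos.mp (by omega)
  obtain ⟨w, hw0, hw1, hwsum⟩ := Finset.mem_convexHull'.mp hc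
  set w' : E → ℝ := fun y => if y = a then 0 else w y with hw'
  have hsum1 : ∑ y ∈ s, w' y = 1 := by
    rw [← Finset.add_sum_erase s w' ha]
    have : ∑ y ∈ s.erase a, w' y = ∑ y ∈ s.erase a, w y :=
      Finset.sum_congr rfl fun y hy => by
        simp [hw', Finset.ne_of_mem_erase hy]
    rw [this, hw1]; simp [hw']
  have hsum2 : ∑ y ∈ s, w' y • y = s.centroid ℝ id := by
    rw [← Finset.add_sum_erase s (fun y => w' y • y) ha]
    have : ∑ y ∈ s.erase a, w' y • y = ∑ y ∈ s.erase a, w y • y :=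
      Finset.sum_congr rfl fun y hy => by
        simp [hw', Finset.ne_of_mem_erase hy]
    rw [this, hwsum]
    simp [hw']
  have hcsum : ∑ y ∈ s, s.centroidWeights ℝ y • (id y : E) = s.centroid ℝ id := by
    rw [s.centroid_eq_centerMass hne,
      Finset.centerMass_eq_of_sum_1 _ _ (s.sum_centroidWeights_eq_one_of_nonempty ℝ hne)]
  have := hind.eq_of_sum_eq_sum_subtype (w₁ := s.centroidWeights ℝ) (w₂ := w')
    (by rw [hsum1, s.sum_centroidWeights_eq_one_of_nonempty ℝ hne])
    (by rw [hsum2]; simpa using hcsum) a ha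
  simp [Finset.centroidWeights_apply, hw'] at this
  exact hne.ne_empty this

lemma centroid_not_mem_self {s : Finset E}
    (hind : AffineIndependent ℝ ((↑) : ↑(s : Set E) → E))
    (hcard : 2 ≤ s.card) :
    s.centroid ℝ id ∉ (s : Set E) := by
  classical
  intro hmem
  set a := s.centroid ℝ id with hadef
  have ha : a ∈ s := hmem
  obtain ⟨b, hb, hba⟩ := Finset.exists_mem_ne (s := s) (by omega) a
  have hne : s.Nonempty := ⟨a, ha⟩
  set w : E → ℝ := fun y => if y = a then 1 else 0 with hwdef
  have hsum1 : ∑ y ∈ s, w y = 1 := by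
    rw [Finset.sum_ite_eq' s a (fun _ => (1:ℝ))]; simp [ha]
  have hsum2 : ∑ y ∈ s, w y • y = a := by
    have : ∀ y ∈ s, w y • y = if y = a then a else 0 := by
      intro y hy; by_cases h : y = a <;> simp [hwdef, h]
    rw [Finset.sum_congr rfl this, Finset.sum_ite_eq' s a (fun _ => a)]; simp [ha]
  have hcsum : ∑ y ∈ s, s.centroidWeights ℝ y • (id y : E) = a := by
    rw [hadef, s.centroid_eq_centerMass hne,
      Finset.centerMass_eq_of_sum_1 _ _ (s.sum_centroidWeights_eq_one_of_nonempty ℝ hne)]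
  have := hind.eq_of_sum_eq_sum_subtype (w₁ := s.centroidWeights ℝ) (w₂ := w)
    (by rw [hsum1, s.sum_centroidWeights_eq_one_of_nonempty ℝ hne])
    (by rw [hsum2]; simpa using hcsum) b hb
  simp [Finset.centroidWeights_apply, hwdef, hba] at this
  exact hne.ne_empty this

end aux

/-- A set of 2 or 3 affinely independent points in ℝ² is a ufg-premise of the
closure system of closed convex sets (conditions (C1) and (C2)). -/
theorem stmt4 (A : Set (EuclideanSpace ℝ (Fin 2)))
    (hA : A.Finite) (hcard : 2 ≤ A.ncard ∧ A.ncard ≤ 3)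
    (hind : AffineIndependent ℝ ((↑) : A → EuclideanSpace ℝ (Fin 2))) :
    let γ : Set (EuclideanSpace ℝ (Fin 2)) → Set (EuclideanSpace ℝ (Fin 2)) :=
      fun S => closure (convexHull ℝ S)
    A ⊂ γ A ∧
    ∀ (ι : Type) (f : ι → Set (EuclideanSpace ℝ (Fin 2))),
      (∀ j, f j ⊂ A) → (⋃ j, γ (f j)) ≠ γ A := by
  intro γ
  classical
  set s : Finset (EuclideanSpace ℝ (Fin 2)) := hA.toFinset with hs
  have hsA : (s : Set (EuclideanSpace ℝ (Fin 2))) = A := hA.coe_toFinset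
  have hscard : 2 ≤ s.card := by
    rw [← Set.ncard_coe_finset, hsA]; exact hcard.1
  have hind' : AffineIndependent ℝ ((↑) : ↑(s : Set (EuclideanSpace ℝ (Fin 2))) → EuclideanSpace ℝ (Fin 2)) := by
    rw [hsA]; exact hind
  set c := s.centroid ℝ id with hc
  have hclosed : IsClosed (convexHull ℝ A) := hA.isClosed_convexHull (𝕜 := ℝ)
  have hγA : γ A = convexHull ℝ A := hclosed.closure_eq
  have hcmem : c ∈ convexHull ℝ A := by
    rw [← hsA]; exact s.centroid_mem_convexHull (Finset.card_pos.mp (by omega))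
  have hkey : ∀ B : Set (EuclideanSpace ℝ (Fin 2)), B ⊂ A → c ∉ γ B := by
    intro B hB hcB
    obtain ⟨a, haA, haB⟩ := Set.exists_of_ssubset hB
    have has : a ∈ s := by rw [← hsA] at haA; exact_mod_cast haA
    have hBsub : B ⊆ ((s.erase a : Finset (EuclideanSpace ℝ (Fin 2))) : Set (EuclideanSpace ℝ (Fin 2))) := by
      intro x hx
      have hxA : x ∈ (s : Set (EuclideanSpace ℝ (Fin 2))) := hsA ▸ hB.1 hx
      refine Finset.mem_coe.mpr (Finset.mem_erase.mpr ⟨?_, hxA⟩)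
      rintro rfl; exact haB hx
    have hclosed' : IsClosed (convexHull ℝ ((s.erase a : Finset (EuclideanSpace ℝ (Fin 2))) : Set (EuclideanSpace ℝ (Fin 2)))) :=
      (s.erase a).finite_toSet.isClosed_convexHull (𝕜 := ℝ)
    have : c ∈ convexHull ℝ ((s.erase a : Finset (EuclideanSpace ℝ (Fin 2))) : Set (EuclideanSpace ℝ (Fin 2))) := by
      have hsubset : γ B ⊆ convexHull ℝ ((s.erase a : Finset (EuclideanSpace ℝ (Fin 2))) : Set (EuclideanSpace ℝ (Fin 2))) := by
        calc γ B ⊆ closure (convexHull ℝ ((s.erase a : Finset (EuclideanSpace ℝ (Fin 2))) : Set (EuclideanSpace ℝ (Fin 2)))) :=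
              closure_mono (convexHull_mono hBsub)
          _ = convexHull ℝ ((s.erase a : Finset (EuclideanSpace ℝ (Fin 2))) : Set (EuclideanSpace ℝ (Fin 2))) := hclosed'.closure_eq
      exact hsubset hcB
    exact centroid_not_mem_erase hind' hscard has this
  constructor
  · constructor
    · exact (subset_convexHull ℝ A).trans subset_closure
    · intro hsub
      have : c ∈ A := hsub (by rw [hγA]; exact hcmem)
      rw [← hsA] at this
      exact centroid_not_mem_self hind' hscard this
  · intro ι f hf heq
    have hcmem' : c ∈ ⋃ j, γ (f j) := by rw [heq, hγA]; exact hcmem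
    obtain ⟨j, hj⟩ := Set.mem_iUnion.mp hcmem'
    exact hkey (f j) (hf j) hj
end

section
/- Let γ be a closure operator on G with closure system E. Suppose Q ⊆ G is a finite set of cardinality k strictly larger than the VC-dimension of E (as a set family on G). Then Q is not a ufg-premise: there exists a proper subset R ⊊ Q and an element g̃ ∈ (γ(R) ∩ Q) \ R, so the implication Q \ {g̃} → Q holds and Q is not minimal. Consequently, every ufg-premise has cardinality at most the VC-dimension of E. -/
/-- ufg-premise: (C1) and the union-free condition (C2). -/
def IsUfgPremise {G : Type*} (γ : Set G → Set G) (A : Set G) : Prop :=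
  A ⊂ γ A ∧ ∀ (ι : Type) (f : ι → Set G), (∀ j, f j ⊂ A) → (⋃ j, γ (f j)) ≠ γ A

lemma key_lemma {G : Type*} (γ : Set G → Set G)
    (hext : ∀ A : Set G, A ⊆ γ A)
    (hmono : ∀ A B : Set G, A ⊆ B → γ A ⊆ γ B)
    (hidem : ∀ A : Set G, γ (γ A) = γ A)
    (d : ℕ)
    (hVC : ∀ S : Set G, S.Finite →
      (∀ T ⊆ S, ∃ E : Set G, γ E = E ∧ E ∩ S = T) → S.ncard ≤ d)
    (Q : Set G) (hQ : Q.Finite) (hcard : d < Q.ncard) :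
    (∃ R : Set G, R ⊂ Q ∧ ∃ g, g ∈ (γ R ∩ Q) \ R) ∧ ¬ IsUfgPremise γ Q := by
  have hex : ∃ R : Set G, R ⊂ Q ∧ ∃ g, g ∈ (γ R ∩ Q) \ R := by
    by_contra h
    push_neg at h
    have : Q.ncard ≤ d := by
      apply hVC Q hQ
      intro T hT
      rcases hT.ssubset_or_eq with hss | rfl
      · refine ⟨γ T, hidem T, ?_⟩
        apply Set.Subset.antisymm
        · intro g hg
          by_contra hgT
          exact h T hss g ⟨hg, hgT⟩
        · exact Set.subset_inter (hext T) hss.subset |>.trans (by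
            intro x hx; exact ⟨(Set.inter_subset_left hx), Set.inter_subset_right hx⟩)
      · exact ⟨γ T, hidem T, Set.inter_eq_right.mpr (hext T)⟩
    omega
  refine ⟨hex, ?_⟩
  rintro ⟨hC1, hC2⟩
  obtain ⟨R, hRQ, g, hgγ, hgR⟩ := hex
  have hgQ : g ∈ Q := hgγ.2
  have hRsub : R ⊆ Q \ {g} := fun x hx => ⟨hRQ.subset hx, fun hxg => hgR (hxg ▸ hx)⟩
  have hgmem : g ∈ γ (Q \ {g}) := hmono R _ hRsub hgγ.1
  have hQsub : Q ⊆ γ (Q \ {g}) := by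
    intro x hx
    by_cases hxg : x = g
    · exact hxg ▸ hgmem
    · exact hext _ ⟨hx, hxg⟩
  have heq : γ (Q \ {g}) = γ Q := by
    apply Set.Subset.antisymm
    · exact hmono _ _ (Set.diff_subset)
    · calc γ Q ⊆ γ (γ (Q \ {g})) := hmono _ _ hQsub
        _ = γ (Q \ {g}) := hidem _
  have hss : Q \ {g} ⊂ Q :=
    Set.sdiff_singleton_ssubset.mpr hgQ
  exact hC2 Unit (fun _ => Q \ {g}) (fun _ => hss) (by rw [Set.iUnion_const]; exact heq)

/-- A finite set whose cardinality exceeds the VC-dimension of the closure system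
is not a ufg-premise: some proper subset already implies one of its elements.
Consequently every ufg-premise has cardinality at most the VC-dimension. -/
theorem stmt7 {G : Type*} (γ : Set G → Set G)
    (hext : ∀ A : Set G, A ⊆ γ A)
    (hmono : ∀ A B : Set G, A ⊆ B → γ A ⊆ γ B)
    (hidem : ∀ A : Set G, γ (γ A) = γ A)
    (d : ℕ)
    (hVC : ∀ S : Set G, S.Finite →
      (∀ T ⊆ S, ∃ E : Set G, γ E = E ∧ E ∩ S = T) → S.ncard ≤ d)
    (Q : Set G) (hQ : Q.Finite) (hcard : d < Q.ncard) :
    ((∃ R : Set G, R ⊂ Q ∧ ∃ g, g ∈ (γ R ∩ Q) \ R) ∧ ¬ IsUfgPremise γ Q) ∧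
    (∀ A : Set G, A.Finite → IsUfgPremise γ A → A.ncard ≤ d) := by
  refine ⟨key_lemma γ hext hmono hidem d hVC Q hQ hcard, ?_⟩
  intro A hA hufg
  by_contra h
  exact (key_lemma γ hext hmono hidem d hVC A hA (by omega)).2 hufg
end

section
/- Let D: G → ℝ be a depth function on a set G with closure operator γ (from a formal context), and define D^qc(g) = sup{α ∈ ℝ | g ∈ γ(Cont_{D,α})}, where Cont_{D,α} = {x ∈ G | D(x) ≥ α}. Then D^qc is quasiconcave: for every α ∈ ℝ, the contour set {g ∈ G | D^qc(g) ≥ α} is closed under γ, i.e., γ({g | D^qc(g) ≥ α}) = {g | D^qc(g) ≥ α}. (Assume G finite and D takes finitely many values, so suprema are attained.) -/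
/-- The quasiconcave version `D^qc` of a depth function, defined via attained
suprema over contour sets, is quasiconcave: all its upper level sets are
closed sets of the closure operator. -/
theorem stmt9 {G : Type*} [Fintype G] (γ : Set G → Set G)
    (hext : ∀ A : Set G, A ⊆ γ A)
    (hmono : ∀ A B : Set G, A ⊆ B → γ A ⊆ γ B)
    (hidem : ∀ A : Set G, γ (γ A) = γ A)
    (D Dqc : G → ℝ)
    (hDqc : ∀ g, IsGreatest {α : ℝ | g ∈ γ {x | α ≤ D x}} (Dqc g)) :
    ∀ α : ℝ, γ {g | α ≤ Dqc g} = {g | α ≤ Dqc g} := by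
  intro α
  apply Set.Subset.antisymm _ (hext _)
  have hsub : {g | α ≤ Dqc g} ⊆ γ {x | α ≤ D x} := by
    intro g hg
    have hmem := (hDqc g).1
    exact hmono {x | Dqc g ≤ D x} {x | α ≤ D x} (fun x hx => Set.mem_setOf.2 (le_trans hg (Set.mem_setOf.1 hx))) hmem
  intro h hh
  have : h ∈ γ {x | α ≤ D x} := by
    have := hmono _ _ hsub hh
    rwa [hidem] at this
  exact (hDqc h).2 this
end

section
/- Let γ₁, γ₂ be closure operators of two formal contexts on the same set G and γ₁₂ the closure operator of their joined context (so γ₁₂(A) = γ₁(A) ∩ γ₂(A)). If every ufg-premise of γ₁ has cardinality at most u₁ and every ufg-premise of γ₂ has cardinality at most u₂, then every ufg-premise of γ₁₂ has cardinality at most u₁ + u₂. -/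
/-- From a finite superset `S` with `b ∈ γ ↑S`, `b ∉ ↑S`, extract a card-minimal
subset `T` with `b ∈ γ ↑T`; it is a ufg-premise. -/
lemma aux_min {G : Type*} (γ : Set G → Set G)
    (hext : ∀ A : Set G, A ⊆ γ A)
    (S : Finset G) (b : G) (hb : b ∈ γ (↑S : Set G)) (hbS : b ∉ (↑S : Set G)) :
    ∃ T : Finset G, T ⊆ S ∧ b ∈ γ (↑T : Set G) ∧ IsUfgPremise γ ↑T := by
  classical
  set P : Finset (Finset G) :=
    S.powerset.filter (fun T : Finset G => b ∈ γ (T : Set G)) with hP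
  have hSP : S ∈ P := by
    simp [hP, Finset.mem_filter, hb]
  obtain ⟨T, hT, hmin⟩ :=
    Finset.exists_min_image P (fun T => T.card) ⟨S, hSP⟩
  rw [hP] at hT
  simp only [Finset.mem_filter, Finset.mem_powerset] at hT
  obtain ⟨hTS, hbT⟩ := hT
  have hbnotT : b ∉ (↑T : Set G) := fun h => hbS (hTS h)
  have key : ∀ B : Set G, B ⊂ (↑T : Set G) → b ∉ γ B := by
    intro B hB hbB
    have hBfin : B.Finite := T.finite_toSet.subset hB.subset
    have hcoe : (↑hBfin.toFinset : Set G) = B := hBfin.coe_toFinset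
    have hT'T : hBfin.toFinset ⊂ T := by
      rw [← Finset.coe_ssubset, hcoe]; exact hB
    have hmem : hBfin.toFinset ∈ P := by
      rw [hP]
      simp only [Finset.mem_filter, Finset.mem_powerset]
      exact ⟨hT'T.subset.trans hTS, by rwa [hcoe]⟩
    have := hmin _ hmem
    have := Finset.card_lt_card hT'T
    omega
  refine ⟨T, hTS, hbT, ?_, ?_⟩
  · refine (hext _).ssubset_of_ne fun h => hbnotT ?_
    rw [h]; exact hbT
  · intro ι f hf heq
    have : b ∈ ⋃ j, γ (f j) := heq ▸ hbT
    obtain ⟨j, hj⟩ := Set.mem_iUnion.mp this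
    exact key (f j) (hf j) hj

/-- If ufg-premises of two closure operators have cardinality at most `u₁` resp.
`u₂`, then ufg-premises of the joined closure operator `A ↦ γ₁ A ∩ γ₂ A`
have cardinality at most `u₁ + u₂`. -/
theorem stmt12 {G : Type*} (γ₁ γ₂ γ₁₂ : Set G → Set G)
    (hext₁ : ∀ A : Set G, A ⊆ γ₁ A)
    (hmono₁ : ∀ A B : Set G, A ⊆ B → γ₁ A ⊆ γ₁ B)
    (hidem₁ : ∀ A : Set G, γ₁ (γ₁ A) = γ₁ A)
    (hext₂ : ∀ A : Set G, A ⊆ γ₂ A)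
    (hmono₂ : ∀ A B : Set G, A ⊆ B → γ₂ A ⊆ γ₂ B)
    (hidem₂ : ∀ A : Set G, γ₂ (γ₂ A) = γ₂ A)
    (hjoin : ∀ A : Set G, γ₁₂ A = γ₁ A ∩ γ₂ A)
    (u₁ u₂ : ℕ)
    (h₁ : ∀ A : Set G, A.Finite → IsUfgPremise γ₁ A → A.ncard ≤ u₁)
    (h₂ : ∀ A : Set G, A.Finite → IsUfgPremise γ₂ A → A.ncard ≤ u₂) :
    ∀ A : Set G, A.Finite → IsUfgPremise γ₁₂ A → A.ncard ≤ u₁ + u₂ := by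
  classical
  intro A hA hufg
  obtain ⟨hC1, hC2⟩ := hufg
  have hmono₁₂ : ∀ X Y : Set G, X ⊆ Y → γ₁₂ X ⊆ γ₁₂ Y := fun X Y h => by
    rw [hjoin, hjoin]; exact Set.inter_subset_inter (hmono₁ _ _ h) (hmono₂ _ _ h)
  set S := hA.toFinset with hS
  have hScoe : (↑S : Set G) = A := hA.coe_toFinset
  set e := S.equivFin with he
  set f : Fin S.card → Set G := fun i => A \ {((e.symm i : S) : G)} with hf
  have hfss : ∀ i, f i ⊂ A := by
    intro i
    have hmem : ((e.symm i : S) : G) ∈ A := hA.mem_toFinset.mp (e.symm i).2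
    exact Set.sdiff_singleton_ssubset.mpr hmem
  have hne := hC2 (Fin S.card) f hfss
  have hsub : (⋃ j, γ₁₂ (f j)) ⊆ γ₁₂ A :=
    Set.iUnion_subset fun j => hmono₁₂ _ _ (hfss j).subset
  obtain ⟨b, hbA, hbU⟩ := Set.exists_of_ssubset (hsub.ssubset_of_ne hne)
  have hb : ∀ a ∈ A, b ∉ γ₁₂ (A \ {a}) := by
    intro a ha hbc
    have haS : a ∈ S := by rw [hS, hA.mem_toFinset]; exact ha
    apply hbU
    refine Set.mem_iUnion.mpr ⟨e ⟨a, haS⟩, ?_⟩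
    have : f (e ⟨a, haS⟩) = A \ {a} := by
      simp [hf, Equiv.symm_apply_apply]
    rw [this]; exact hbc
  have hbγ : b ∈ γ₁ A ∧ b ∈ γ₂ A := by
    have := hbA; rw [hjoin] at this; exact this
  by_cases hbmemA : b ∈ A
  · -- then A = {b}
    have hAsingle : A = {b} := by
      ext x
      constructor
      · intro hx
        by_contra hxb
        have hxb' : b ≠ x := fun h => hxb (h ▸ rfl)
        have hbin : b ∈ γ₁₂ (A \ {x}) := by
          rw [hjoin]
          exact ⟨hext₁ _ ⟨hbmemA, hxb'⟩, hext₂ _ ⟨hbmemA, hxb'⟩⟩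
        exact hb x hx hbin
      · intro hx
        rw [Set.mem_singleton_iff] at hx
        exact hx ▸ hbmemA
    have hb0 : b ∉ γ₁₂ (∅ : Set G) := by
      have := hb b hbmemA
      rwa [hAsingle, Set.diff_self] at this
    rw [hjoin] at hb0
    obtain ⟨c, hcγ, hcA⟩ := Set.exists_of_ssubset hC1
    rw [hjoin] at hcγ
    have hcases : b ∉ γ₁ (∅ : Set G) ∨ b ∉ γ₂ (∅ : Set G) := by
      by_contra h
      push_neg at h
      exact hb0 ⟨h.1, h.2⟩
    have hncard : A.ncard = 1 := by rw [hAsingle]; exact Set.ncard_singleton b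
    rcases hcases with h0 | h0
    · have hufg1 : IsUfgPremise γ₁ A := by
        constructor
        · refine (hext₁ A).ssubset_of_ne fun h => hcA ?_
          rw [h]; exact hcγ.1
        · intro ι g hg heq
          have hempty : ∀ j, g j = (∅ : Set G) := fun j => by
            have := hg j; rw [hAsingle] at this
            exact Set.ssubset_singleton_iff.mp this
          have hbin : b ∈ ⋃ j, γ₁ (g j) := heq ▸ hbγ.1
          obtain ⟨j, hj⟩ := Set.mem_iUnion.mp hbin
          rw [hempty j] at hj
          exact h0 hj
      have := h₁ A hA hufg1
      omega
    · have hufg2 : IsUfgPremise γ₂ A := by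
        constructor
        · refine (hext₂ A).ssubset_of_ne fun h => hcA ?_
          rw [h]; exact hcγ.2
        · intro ι g hg heq
          have hempty : ∀ j, g j = (∅ : Set G) := fun j => by
            have := hg j; rw [hAsingle] at this
            exact Set.ssubset_singleton_iff.mp this
          have hbin : b ∈ ⋃ j, γ₂ (g j) := heq ▸ hbγ.2
          obtain ⟨j, hj⟩ := Set.mem_iUnion.mp hbin
          rw [hempty j] at hj
          exact h0 hj
      have := h₂ A hA hufg2
      omega
  · -- b ∉ A
    obtain ⟨T₁, hT₁S, hbT₁, hufg₁⟩ :=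
      aux_min γ₁ hext₁ S b (by rw [hScoe]; exact hbγ.1) (by rw [hScoe]; exact hbmemA)
    obtain ⟨T₂, hT₂S, hbT₂, hufg₂⟩ :=
      aux_min γ₂ hext₂ S b (by rw [hScoe]; exact hbγ.2) (by rw [hScoe]; exact hbmemA)
    have hc₁ : (↑T₁ : Set G).ncard ≤ u₁ := h₁ _ T₁.finite_toSet hufg₁
    have hc₂ : (↑T₂ : Set G).ncard ≤ u₂ := h₂ _ T₂.finite_toSet hufg₂
    have hcover : A ⊆ (↑T₁ : Set G) ∪ ↑T₂ := by
      intro a ha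
      by_contra hnot
      rw [Set.mem_union] at hnot
      push_neg at hnot
      have hs₁ : (↑T₁ : Set G) ⊆ A \ {a} := by
        intro x hx
        refine ⟨by rw [← hScoe]; exact hT₁S hx, fun h => hnot.1 ?_⟩
        rw [Set.mem_singleton_iff] at h
        exact h ▸ hx
      have hs₂ : (↑T₂ : Set G) ⊆ A \ {a} := by
        intro x hx
        refine ⟨by rw [← hScoe]; exact hT₂S hx, fun h => hnot.2 ?_⟩
        rw [Set.mem_singleton_iff] at h
        exact h ▸ hx
      have : b ∈ γ₁₂ (A \ {a}) := by
        rw [hjoin]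
        exact ⟨hmono₁ _ _ hs₁ hbT₁, hmono₂ _ _ hs₂ hbT₂⟩
      exact hb a ha this
    calc A.ncard ≤ ((↑T₁ : Set G) ∪ ↑T₂).ncard :=
          Set.ncard_le_ncard hcover (T₁.finite_toSet.union T₂.finite_toSet)
      _ ≤ (↑T₁ : Set G).ncard + (↑T₂ : Set G).ncard := Set.ncard_union_le _ _
      _ ≤ u₁ + u₂ := Nat.add_le_add hc₁ hc₂
end

section
/- Let γ be the closure operator of a hierarchical-nominal formal context. Then any two extents E₁, E₂ are either nested (E₁ ⊆ E₂ or E₂ ⊆ E₁) or disjoint (E₁ ∩ E₂ = ∅). Consequently, any quasiconcave depth function on hierarchical-nominal data with L levels has at most L + 2 distinct values attained on a chain of nested contour sets. -/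
/-- Closure operator of the hierarchical-nominal formal context with `L` levels. -/
def hierGamma {G : Type*} (L : ℕ) (c : G → Fin L → ℕ) : Set G → Set G :=
  fun A => {g | ∀ m ∈ {m : ℕ × (ℕ → ℕ) | ∀ a ∈ A,
      1 ≤ m.1 ∧ m.1 ≤ L ∧ ∀ i : Fin L, (i : ℕ) < m.1 → c a i = m.2 i},
    1 ≤ m.1 ∧ m.1 ≤ L ∧ ∀ i : Fin L, (i : ℕ) < m.1 → c g i = m.2 i}

section Aux

variable {G : Type*} (L : ℕ) (c : G → Fin L → ℕ)

/-- The set of valid common-prefix lengths of `A`. -/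
def hierK (A : Set G) : Set ℕ :=
  {k | ∃ f : ℕ → ℕ, ∀ a ∈ A, 1 ≤ k ∧ k ≤ L ∧ ∀ i : Fin L, (i : ℕ) < k → c a i = f i}

lemma mem_hierGamma_iff (A : Set G) (g : G) :
    g ∈ hierGamma L c A ↔ ∀ m : ℕ × (ℕ → ℕ),
      (∀ a ∈ A, 1 ≤ m.1 ∧ m.1 ≤ L ∧ ∀ i : Fin L, (i : ℕ) < m.1 → c a i = m.2 i) →
      (1 ≤ m.1 ∧ m.1 ≤ L ∧ ∀ i : Fin L, (i : ℕ) < m.1 → c g i = m.2 i) := Iff.rfl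

lemma hier_key {A₁ A₂ : Set G}
    (hsub : ∀ k ∈ hierK L c A₁, ∃ k' ∈ hierK L c A₂, k ≤ k')
    {g : G} (hg1 : g ∈ hierGamma L c A₁) (hg2 : g ∈ hierGamma L c A₂) :
    hierGamma L c A₂ ⊆ hierGamma L c A₁ := by
  intro h hh
  rw [mem_hierGamma_iff] at hg1 hg2 ⊢
  rw [mem_hierGamma_iff] at hh
  intro m hm
  obtain ⟨h1, h2, h3⟩ := hg1 m hm
  refine ⟨h1, h2, fun i hi => ?_⟩
  have hk1 : m.1 ∈ hierK L c A₁ := ⟨m.2, hm⟩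
  obtain ⟨k', ⟨f', hf'⟩, hle⟩ := hsub m.1 hk1
  have hg' := hg2 (k', f') hf'
  have hh' := hh (k', f') hf'
  have heq : c h i = c g i := by
    rw [hh'.2.2 i (lt_of_lt_of_le hi hle), hg'.2.2 i (lt_of_lt_of_le hi hle)]
  rw [heq]; exact h3 i hi

/-- Agreement lengths of a set: all pairs of elements agree on the first `k` coordinates. -/
def agr (E : Set G) : Set ℕ :=
  {k | k ≤ L ∧ ∀ g ∈ E, ∀ h ∈ E, ∀ i : Fin L, (i : ℕ) < k → c g i = c h i}

noncomputable def lev (E : Set G) : ℕ := sSup (agr L c E)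

lemma agr_zero_mem (E : Set G) : 0 ∈ agr L c E :=
  ⟨Nat.zero_le _, fun _ _ _ _ i hi => absurd hi (Nat.not_lt_zero _)⟩

lemma agr_bdd (E : Set G) : BddAbove (agr L c E) := ⟨L, fun _ hk => hk.1⟩

lemma lev_mem (E : Set G) : lev L c E ∈ agr L c E :=
  Nat.sSup_mem ⟨0, agr_zero_mem L c E⟩ (agr_bdd L c E)

lemma lev_le (E : Set G) {k : ℕ} (hk : k ∈ agr L c E) : k ≤ lev L c E :=
  le_csSup (agr_bdd L c E) hk

/-- A nonempty closed set distinct from `univ` is the prefix ball of radius `lev`. -/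
lemma ball_rep {E : Set G} (hE : hierGamma L c E = E) {g₀ : G} (hg₀ : g₀ ∈ E)
    (hne : E ≠ Set.univ) :
    1 ≤ lev L c E ∧ E = {h | ∀ i : Fin L, (i : ℕ) < lev L c E → c h i = c g₀ i} := by
  obtain ⟨x, hx⟩ := Set.ne_univ_iff_exists_notMem E |>.mp hne
  have hx' : x ∉ hierGamma L c E := by rw [hE]; exact hx
  rw [mem_hierGamma_iff] at hx'
  push_neg at hx'
  obtain ⟨m, hP, _⟩ := hx'
  have hmem : m.1 ∈ agr L c E :=
    ⟨(hP g₀ hg₀).2.1, fun g hg h hh i hi => by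
      rw [(hP g hg).2.2 i hi, (hP h hh).2.2 i hi]⟩
  have h1 : 1 ≤ lev L c E := le_trans (hP g₀ hg₀).1 (lev_le L c E hmem)
  refine ⟨h1, Set.Subset.antisymm ?_ ?_⟩
  · intro h hh i hi
    exact (lev_mem L c E).2 h hh g₀ hg₀ i hi
  · intro h hh
    have hclosed : h ∈ hierGamma L c E := by
      rw [mem_hierGamma_iff]
      intro m' hm'
      obtain ⟨h1', h2', h3'⟩ := hm' g₀ hg₀
      refine ⟨h1', h2', fun i hi => ?_⟩
      have hk' : m'.1 ∈ agr L c E :=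
        ⟨h2', fun g hg h' hh' i' hi' => by
          rw [(hm' g hg).2.2 i' hi', (hm' h' hh').2.2 i' hi']⟩
      have : (i : ℕ) < lev L c E := lt_of_lt_of_le hi (lev_le L c E hk')
      rw [hh i this]; exact h3' i hi
    rwa [hE] at hclosed

/-- Strict inclusion of nonempty closed sets strictly decreases the level. -/
lemma lev_strict {E E' : Set G} (hEc : hierGamma L c E = E)
    (hE'c : hierGamma L c E' = E') (hE'u : E' ≠ Set.univ)
    {g₀ : G} (hg₀ : g₀ ∈ E) (hss : E ⊆ E') (hne : E ≠ E') :
    lev L c E' < lev L c E := by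
  have hEu : E ≠ Set.univ := by
    intro h; apply hE'u
    exact Set.eq_univ_of_univ_subset (h ▸ hss)
  have hg₀' : g₀ ∈ E' := hss hg₀
  have hrep := ball_rep L c hEc hg₀ hEu
  have hrep' := ball_rep L c hE'c hg₀' hE'u
  have hmem : lev L c E' ∈ agr L c E :=
    ⟨(lev_mem L c E').1, fun g hg h hh i hi =>
      (lev_mem L c E').2 g (hss hg) h (hss hh) i hi⟩
  have hle : lev L c E' ≤ lev L c E := lev_le L c E hmem
  rcases lt_or_eq_of_le hle with h | h
  · exact h
  · exfalso; apply hne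
    rw [hrep.2, hrep'.2, h]

end Aux

/-- For hierarchical-nominal data, any two extents are nested or disjoint, and
a quasiconcave depth function takes at most `L + 2` distinct values. -/
theorem stmt16 {G : Type*} [Finite G] (L : ℕ) (hL : 1 ≤ L) (c : G → Fin L → ℕ) :
    (∀ E₁ E₂ : Set G, (∃ A, E₁ = hierGamma L c A) → (∃ A, E₂ = hierGamma L c A) →
      E₁ ⊆ E₂ ∨ E₂ ⊆ E₁ ∨ E₁ ∩ E₂ = ∅) ∧
    (∀ D : G → ℝ,
      (∀ α : ℝ, hierGamma L c {g | α ≤ D g} = {g | α ≤ D g}) →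
      (Set.range D).ncard ≤ L + 2) := by
  constructor
  · rintro E₁ E₂ ⟨A₁, rfl⟩ ⟨A₂, rfl⟩
    by_cases hg : (hierGamma L c A₁ ∩ hierGamma L c A₂).Nonempty
    · obtain ⟨g, hg1, hg2⟩ := hg
      by_cases hsub : ∀ k ∈ hierK L c A₁, ∃ k' ∈ hierK L c A₂, k ≤ k'
      · exact Or.inr (Or.inl (hier_key L c hsub hg1 hg2))
      · push_neg at hsub
        obtain ⟨k₀, hk₀, hub⟩ := hsub
        exact Or.inl (hier_key L c (fun k' hk' => ⟨k₀, hk₀, (hub k' hk').le⟩) hg2 hg1)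
    · exact Or.inr (Or.inr (Set.not_nonempty_iff_eq_empty.mp hg))
  · intro D hQC
    classical
    set Cv : ℝ → Set G := fun v => {g | v ≤ D g} with hCv
    have hclosed : ∀ v, hierGamma L c (Cv v) = Cv v := hQC
    set φ : ℝ → ℕ := fun v =>
      if Cv v = ∅ then 0 else if Cv v = Set.univ then L + 1 else lev L c (Cv v) with hφ
    have hlevle : ∀ v, lev L c (Cv v) ≤ L := fun v => (lev_mem L c (Cv v)).1
    have hmaps : ∀ v ∈ Set.range D, φ v ∈ Set.Iio (L + 2) := by
      intro v _
      simp only [hφ, Set.mem_Iio]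
      split_ifs with h1 h2
      · omega
      · omega
      · have := hlevle v; omega
    have hinj : Set.InjOn φ (Set.range D) := by
      have key : ∀ v ∈ Set.range D, ∀ w ∈ Set.range D, v < w → φ v ≠ φ w := by
        rintro v ⟨gv, hgv⟩ w hw hlt
        have hss : Cv w ⊆ Cv v := fun h hh => le_trans hlt.le hh
        have hgvv : gv ∈ Cv v := by simp [hCv, hgv.ge]
        have hgvw : gv ∉ Cv w := by
          simp only [hCv, Set.mem_setOf_eq]
          rw [hgv]; exact not_le.mpr hlt
        have hvne : Cv v ≠ ∅ := Set.nonempty_iff_ne_empty.mp ⟨gv, hgvv⟩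
        by_cases hwe : Cv w = ∅
        · -- φ w = 0, φ v ≥ 1
          simp only [hφ, hvne, hwe, if_true, if_false]
          split_ifs with h2
          · omega
          · obtain ⟨h1, _⟩ := ball_rep L c (hclosed v) hgvv h2
            omega
        · have hwu : Cv w ≠ Set.univ := fun h => hgvw (h ▸ Set.mem_univ gv)
          by_cases hvu : Cv v = Set.univ
          · have h1 : φ v = L + 1 := by
              simp only [hφ]; rw [if_neg hvne, if_pos hvu]
            have h2 : φ w = lev L c (Cv w) := by
              simp only [hφ]; rw [if_neg hwe, if_neg hwu]
            have := hlevle w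
            omega
          · simp only [hφ, hvne, hwe, hvu, hwu, if_false]
            obtain ⟨g₀, hg₀⟩ := Set.nonempty_iff_ne_empty.mpr hwe
            have hne : Cv w ≠ Cv v := fun h => hgvw (h ▸ hgvv)
            have := lev_strict L c (hclosed w) (hclosed v) hvu hg₀ hss hne
            omega
      intro v hv w hw hvw
      by_contra hne
      rcases lt_or_gt_of_ne hne with h | h
      · exact key v hv w hw h hvw
      · exact key w hw v hv h hvw.symm
    have hcard := Set.ncard_le_ncard_of_injOn φ hmaps hinj (Set.finite_Iio _)
    have : (Set.Iio (L + 2)).ncard = L + 2 := by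
      rw [Set.ncard_eq_toFinset_card']
      simp
    omega
end

section
/- Let γ be a closure operator on G and let g₁, g₂ ∈ G with γ({g₂}) ⊆ γ({g₁}). Then every ufg-conclusion containing g₁ also contains g₂: for every ufg-premise A with g₁ ∈ γ(A), one has g₂ ∈ γ(A). Consequently any depth function defined as a (weighted) measure of ufg-premises whose conclusions contain a point satisfies isotonicity: D(g₁) ≤ D(g₂). -/
open Classical in
/-- Isotonicity: if `γ {g₂} ⊆ γ {g₁}`, then every ufg-conclusion containing `g₁`
contains `g₂`, and consequently the ufg-depth (a weighted probability that a
randomly drawn ufg-conclusion contains the point) satisfies `D g₁ ≤ D g₂`. -/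
theorem stmt17 {G : Type*} [Fintype G] (γ : Set G → Set G)
    (hext : ∀ A : Set G, A ⊆ γ A)
    (hmono : ∀ A B : Set G, A ⊆ B → γ A ⊆ γ B)
    (hidem : ∀ A : Set G, γ (γ A) = γ A)
    (g₁ g₂ : G) (hg : γ {g₂} ⊆ γ {g₁})
    (N : ℕ) (C : ℕ → ℝ) (hC : ∀ j, 0 < C j)
    (p : G → ℝ) (hp : ∀ g, 0 ≤ p g)
    (D : G → ℝ)
    (hD : ∀ g, D g = ∑ j ∈ Finset.range N, C j *
        (∑ x : Fin j → G,
          if IsUfgPremise γ (Set.range x) ∧ g ∈ γ (Set.range x)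
          then ∏ i, p (x i) else 0) /
        (∑ x : Fin j → G,
          if IsUfgPremise γ (Set.range x) then ∏ i, p (x i) else 0)) :
    (∀ A : Set G, IsUfgPremise γ A → g₁ ∈ γ A → g₂ ∈ γ A) ∧ D g₁ ≤ D g₂ := by
  have key : ∀ A : Set G, g₁ ∈ γ A → g₂ ∈ γ A := by
    intro A h1
    have h2 : γ {g₁} ⊆ γ A := by
      have : ({g₁} : Set G) ⊆ γ A := by simpa using h1
      have := hmono _ _ this
      rwa [hidem] at this
    exact h2 (hg (hext {g₂} rfl))
  refine ⟨fun A _ h1 => key A h1, ?_⟩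
  rw [hD, hD]
  apply Finset.sum_le_sum
  intro j _
  set den := ∑ x : Fin j → G,
      if IsUfgPremise γ (Set.range x) then ∏ i, p (x i) else 0 with hden
  have hdnn : 0 ≤ den := by
    apply Finset.sum_nonneg
    intro x _
    split
    · exact Finset.prod_nonneg fun i _ => hp _
    · exact le_rfl
  have hnum : (∑ x : Fin j → G,
      if IsUfgPremise γ (Set.range x) ∧ g₁ ∈ γ (Set.range x) then ∏ i, p (x i) else 0)
      ≤ ∑ x : Fin j → G,
      if IsUfgPremise γ (Set.range x) ∧ g₂ ∈ γ (Set.range x) then ∏ i, p (x i) else 0 := by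
    apply Finset.sum_le_sum
    intro x _
    by_cases h : IsUfgPremise γ (Set.range x) ∧ g₁ ∈ γ (Set.range x)
    · rw [if_pos h, if_pos ⟨h.1, key _ h.2⟩]
    · rw [if_neg h]
      split
      · exact Finset.prod_nonneg fun i _ => hp _
      · exact le_rfl
  exact div_le_div_of_nonneg_right
    (mul_le_mul_of_nonneg_left hnum (hC j).le) hdnn
end
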